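/- For c ∈ ℂ with c ≠ 0, define F_c : ℂ → ℝ by F_c(v) := max over the three α ∈ ℂ with α³ = c of 2·Re(α·v), and define the inner product g(w,v) := 2·|c|^{2/3}·Re(w·conj(v)) on ℂ ≅ ℝ². Then for every w ∈ ℂ: sSup {g(w,v) | v ∈ ℂ, F_c(v) ≤ 1} = F_{−c}(w). In other words, the dual of the triangular Finsler norm F_c with respect to g equals F_{−c}. -/

import Mathlib

/-- The triangular Finsler norm `F_c(v) = max_{α³ = c} 2 Re(α v)`. -/
noncomputable def triF (c : ℂ) (v : ℂ) : ℝ :=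
  sSup {r : ℝ | ∃ α : ℂ, α ^ 3 = c ∧ r = 2 * (α * v).re}

/-- The inner product `g(w,v) = 2 |c|^{2/3} Re(w v̄)` on `ℂ ≅ ℝ²`
(twice the flat metric determined by the cubic differential `c dz³`). -/
noncomputable def triG (c : ℂ) (w v : ℂ) : ℝ :=
  2 * ‖c‖ ^ ((2 : ℝ) / 3) * (w * (starRingEnd ℂ) v).re

/-- A primitive cube root of unity. -/
noncomputable def tω : ℂ := ⟨-1/2, Real.sqrt 3 / 2⟩

lemma tri_h3 : Real.sqrt 3 * Real.sqrt 3 = 3 := Real.mul_self_sqrt (by norm_num)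
lemma tω_re : tω.re = -1/2 := rfl
lemma tω_im : tω.im = Real.sqrt 3 / 2 := rfl
lemma tω2_re : (tω^2).re = -1/2 := by
  simp [pow_two, Complex.mul_re, tω_re, tω_im]; nlinarith [tri_h3]
lemma tω2_im : (tω^2).im = -(Real.sqrt 3 / 2) := by
  simp [pow_two, Complex.mul_im, tω_re, tω_im]; ring
lemma tω_sum : 1 + tω + tω^2 = 0 := by
  rw [Complex.ext_iff]
  constructor <;> simp [tω, pow_two, Complex.mul_re, Complex.mul_im] <;> nlinarith [tri_h3]
lemma tω_cube : tω^3 = 1 := by linear_combination (tω - 1) * tω_sum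
lemma tω_conj : (starRingEnd ℂ) tω = tω^2 := by
  rw [Complex.ext_iff]
  constructor <;> simp [tω, pow_two, Complex.mul_re, Complex.mul_im] <;> nlinarith [tri_h3]
lemma tω2_conj : (starRingEnd ℂ) (tω^2) = tω := by
  rw [map_pow, tω_conj]
  linear_combination tω * tω_cube

lemma csSup_triple (a b c : ℝ) : sSup {a, b, c} = max a (max b c) := by
  rw [csSup_insert (Set.toFinite _).bddAbove ⟨b, by simp⟩, csSup_pair]

lemma triF_eq (d α : ℂ) (h : α^3 = d) (v : ℂ) :
    triF d v = max (2*(α*v).re) (max (2*((tω*α)*v).re) (2*((tω^2*α)*v).re)) := by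
  unfold triF
  have hset : {r : ℝ | ∃ β : ℂ, β^3 = d ∧ r = 2*(β*v).re}
      = {2*(α*v).re, 2*((tω*α)*v).re, 2*((tω^2*α)*v).re} := by
    ext r
    simp only [Set.mem_setOf_eq, Set.mem_insert_iff, Set.mem_singleton_iff]
    constructor
    · rintro ⟨β, hβ, rfl⟩
      have hprod : (β - α)*(β - tω*α)*(β - tω^2*α) = 0 := by
        linear_combination (β*α^2 - β^2*α) * tω_sum + (β*α^2 - α^3) * tω_cube + hβ - h
      rcases mul_eq_zero.1 hprod with h' | h'
      · rcases mul_eq_zero.1 h' with h'' | h''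
        · left; rw [sub_eq_zero.1 h'']
        · right; left; rw [sub_eq_zero.1 h'']
      · right; right; rw [sub_eq_zero.1 h']
    · rintro (h' | h' | h')
      · exact ⟨α, h, h'⟩
      · exact ⟨tω*α, by linear_combination α^3 * tω_cube + h, h'⟩
      · exact ⟨tω^2*α, by linear_combination (tω^3+1)*α^3 * tω_cube + h, h'⟩
  rw [hset, csSup_triple]

lemma triG_eq (c : ℂ) (α : ℂ) (h : α^3 = c) (w v : ℂ) :
    triG c w v = 2 * ((α*w) * (starRingEnd ℂ) (α*v)).re := by
  unfold triG
  have habs : ‖c‖ ^ ((2:ℝ)/3) = Complex.normSq α := by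
    have h1 : ‖α‖ ^ (3:ℕ) = ‖c‖ := by rw [← h, norm_pow]
    rw [← h1, ← Real.rpow_natCast ‖α‖ 3, ← Real.rpow_mul (norm_nonneg α)]
    norm_num
    exact Complex.sq_norm α
  have hmul : (α*w) * (starRingEnd ℂ) (α*v) = (Complex.normSq α : ℂ) * (w * (starRingEnd ℂ) v) := by
    rw [map_mul, ← Complex.mul_conj]; ring
  rw [habs, hmul, Complex.re_ofReal_mul]
  ring

lemma tri_upper (u W : ℂ) (h0 : 2*u.re ≤ 1) (h1 : 2*(tω*u).re ≤ 1) (h2 : 2*(tω^2*u).re ≤ 1) :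
    2*(W * (starRingEnd ℂ) u).re
      ≤ max (2*(-W).re) (max (2*(-(tω*W)).re) (2*(-(tω^2*W)).re)) := by
  set M := max (2*(-W).re) (max (2*(-(tω*W)).re) (2*(-(tω^2*W)).re)) with hM
  have hA : 2*(-W).re ≤ M := le_max_left _ _
  have hB : 2*(-(tω*W)).re ≤ M := le_trans (le_max_left _ _) (le_max_right _ _)
  have hC : 2*(-(tω^2*W)).re ≤ M := le_trans (le_max_right _ _) (le_max_right _ _)
  have P0 := mul_nonneg (by linarith : (0:ℝ) ≤ 1 - 2*u.re)
    (by linarith : (0:ℝ) ≤ M - 2*(-W).re)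
  have P1 := mul_nonneg (by linarith : (0:ℝ) ≤ 1 - 2*(tω*u).re)
    (by linarith : (0:ℝ) ≤ M - 2*(-(tω*W)).re)
  have P2 := mul_nonneg (by linarith : (0:ℝ) ≤ 1 - 2*(tω^2*u).re)
    (by linarith : (0:ℝ) ≤ M - 2*(-(tω^2*W)).re)
  have hbq : Real.sqrt 3 * Real.sqrt 3 * (u.im * W.im) = 3 * (u.im * W.im) := by rw [tri_h3]
  simp only [Complex.mul_re, Complex.neg_re, Complex.conj_re, Complex.conj_im,
    tω_re, tω_im, tω2_re, tω2_im] at P0 P1 P2 ⊢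
  nlinarith [P0, P1, P2, hbq]

theorem stmt8 (c : ℂ) (hc : c ≠ 0) (w : ℂ) :
    sSup {r : ℝ | ∃ v : ℂ, triF c v ≤ 1 ∧ r = triG c w v} = triF (-c) w := by
  obtain ⟨α, hα⟩ := Complex.isAlgClosed.exists_pow_nat_eq c (n := 3) (by norm_num)
  have hαne : α ≠ 0 := by
    intro h; apply hc; rw [← hα, h]; ring
  set W := α * w with hW
  set S := {r : ℝ | ∃ v : ℂ, triF c v ≤ 1 ∧ r = triG c w v} with hS
  set M := max (2*(-W).re) (max (2*(-(tω*W)).re) (2*(-(tω^2*W)).re)) with hM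
  -- the right-hand side equals M
  have hR : triF (-c) w = M := by
    rw [triF_eq (-c) (-α) (by rw [← hα]; ring) w, hM,
      show (-α)*w = -W by rw [hW]; ring,
      show (tω*(-α))*w = -(tω*W) by rw [hW]; ring,
      show (tω^2*(-α))*w = -(tω^2*W) by rw [hW]; ring]
  -- every element of S is at most M
  have hub : ∀ r ∈ S, r ≤ M := by
    rintro r ⟨v, hv, rfl⟩
    rw [triF_eq c α hα v] at hv
    have h0 : 2*(α*v).re ≤ 1 := le_trans (le_max_left _ _) hv
    have h1 : 2*((tω*α)*v).re ≤ 1 :=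
      le_trans (le_trans (le_max_left _ _) (le_max_right _ _)) hv
    have h2 : 2*((tω^2*α)*v).re ≤ 1 :=
      le_trans (le_trans (le_max_right _ _) (le_max_right _ _)) hv
    rw [triG_eq c α hα w v]
    have h1' : 2*(tω*(α*v)).re ≤ 1 := by rw [show tω*(α*v) = (tω*α)*v by ring]; exact h1
    have h2' : 2*(tω^2*(α*v)).re ≤ 1 := by rw [show tω^2*(α*v) = (tω^2*α)*v by ring]; exact h2
    exact tri_upper (α*v) W h0 h1' h2'
  have hbdd : BddAbove S := ⟨M, hub⟩
  -- computation of triG at the special points α⁻¹ * u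
  have hGval : ∀ u : ℂ, triG c w (α⁻¹ * u) = 2 * (W * (starRingEnd ℂ) u).re := by
    intro u
    rw [triG_eq c α hα w (α⁻¹ * u), show α * (α⁻¹ * u) = u by field_simp]
  have hFval : ∀ u : ℂ,
      triF c (α⁻¹ * u) = max (2*u.re) (max (2*(tω*u).re) (2*(tω^2*u).re)) := by
    intro u
    rw [triF_eq c α hα (α⁻¹ * u),
      show α * (α⁻¹ * u) = u by field_simp,
      show (tω*α) * (α⁻¹ * u) = tω*u by field_simp,
      show (tω^2*α) * (α⁻¹ * u) = tω^2*u by field_simp]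
  -- the three vertices
  have hrω : tω.re = -1/2 := rfl
  have hrω2 : (tω^2).re = -1/2 := tω2_re
  have mem0 : 2*(-W).re ∈ S := by
    refine ⟨α⁻¹ * (-1), ?_, ?_⟩
    · rw [hFval]
      simp only [Complex.neg_re, Complex.one_re, mul_neg_one]
      rw [hrω, hrω2]; norm_num
    · rw [hGval]
      simp only [map_neg, map_one, mul_neg_one]
  have mem1 : 2*(-(tω*W)).re ∈ S := by
    refine ⟨α⁻¹ * (-(tω^2)), ?_, ?_⟩
    · rw [hFval]
      rw [show tω * -(tω^2) = -1 by linear_combination -tω_cube,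
        show tω^2 * -(tω^2) = -tω by linear_combination (-tω)*tω_cube]
      simp only [Complex.neg_re, Complex.one_re, hrω, hrω2]
      norm_num
    · rw [hGval]
      rw [map_neg, tω2_conj]
      rw [show W * -tω = -(tω*W) by ring]
  have mem2 : 2*(-(tω^2*W)).re ∈ S := by
    refine ⟨α⁻¹ * (-tω), ?_, ?_⟩
    · rw [hFval]
      rw [show tω * -tω = -(tω^2) by ring,
        show tω^2 * -tω = -1 by linear_combination -tω_cube]
      simp only [Complex.neg_re, Complex.one_re, hrω, hrω2]
      norm_num
    · rw [hGval]
      rw [map_neg, tω_conj]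
      rw [show W * -(tω^2) = -(tω^2*W) by ring]
  rw [hR]
  apply le_antisymm
  · exact csSup_le ⟨_, mem0⟩ hub
  · exact max_le (le_csSup hbdd mem0) (max_le (le_csSup hbdd mem1) (le_csSup hbdd mem2))
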